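/- Cauchy's argument principle: if f is holomorphic on a neighborhood of the closed disc of radius R about c and has no zeros on the boundary circle, then (1/(2πi)) ∮_{|z−c|=R} f′(z)/f(z) dz equals the number of zeros of f in the open disc counted with multiplicity. -/

import Mathlib

open Complex Real

lemma circleIntegrable_finset_sum {ι : Type*} (s : Finset ι) (F : ι → ℂ → ℂ) {c : ℂ} {R : ℝ}
    (hF : ∀ i ∈ s, CircleIntegrable (F i) c R) :
    CircleIntegrable (fun w => ∑ i ∈ s, F i w) c R := by
  show IntervalIntegrable (fun θ => ∑ i ∈ s, F i (circleMap c R θ)) MeasureTheory.volume 0 (2 * π)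
  have h2 := IntervalIntegrable.sum (μ := MeasureTheory.volume) (a := 0) (b := 2 * π) s
    (f := fun i θ => F i (circleMap c R θ)) (fun i hi => hF i hi)
  rwa [show (∑ i ∈ s, fun θ => F i (circleMap c R θ))
      = fun θ => ∑ i ∈ s, F i (circleMap c R θ) from by ext θ; simp] at h2

lemma circleIntegral_finset_sum {ι : Type*} (s : Finset ι) (F : ι → ℂ → ℂ) {c : ℂ} {R : ℝ}
    (hF : ∀ i ∈ s, CircleIntegrable (F i) c R) :
    (∮ z in C(c, R), ∑ i ∈ s, F i z) = ∑ i ∈ s, ∮ z in C(c, R), F i z := by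
  simp only [circleIntegral, Finset.smul_sum]
  exact intervalIntegral.integral_finset_sum fun i hi => (hF i hi).out

lemma circleIntegral_add' {F G : ℂ → ℂ} {c : ℂ} {R : ℝ} (hF : CircleIntegrable F c R)
    (hG : CircleIntegrable G c R) :
    (∮ z in C(c, R), (F z + G z)) = (∮ z in C(c, R), F z) + ∮ z in C(c, R), G z := by
  simp only [circleIntegral, smul_add]
  exact intervalIntegral.integral_add hF.out hG.out

/-- Cauchy's argument principle on a circle: if `f` is holomorphic on an open set containing
the closed disc of radius `R` about `c` and has no zeros on the boundary circle, then
`(1/(2πi)) ∮_{|z-c|=R} f'(z)/f(z) dz` equals the number of zeros of `f` in the open disc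
counted with multiplicity (here `Z` is the finite set of zeros in the open disc and `m z`
the multiplicity of each zero `z`). -/
theorem argument_principle_circle
    (f : ℂ → ℂ) (c : ℂ) (R : ℝ) (hR : 0 < R)
    (U : Set ℂ) (hU : IsOpen U) (hsub : Metric.closedBall c R ⊆ U)
    (hf : DifferentiableOn ℂ f U)
    (hbd : ∀ z ∈ Metric.sphere c R, f z ≠ 0)
    (Z : Finset ℂ) (hZ : ∀ z, z ∈ Z ↔ z ∈ Metric.ball c R ∧ f z = 0)
    (m : ℂ → ℕ)
    (hm : ∀ z ∈ Z, ∃ h : ℂ → ℂ, AnalyticAt ℂ h z ∧ h z ≠ 0 ∧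
      ∀ᶠ w in nhds z, f w = (w - z) ^ m z * h w) :
    (2 * π * Complex.I)⁻¹ * (∮ z in C(c, R), deriv f z / f z) = ∑ z ∈ Z, (m z : ℂ) := by
  classical
  choose! h hh_an hh_ne hh_eq using hm
  set P : ℂ → ℂ := fun w => ∏ z ∈ Z, (w - z) ^ m z with hPdef
  have hPd : ∀ w, DifferentiableAt ℂ P w := fun w =>
    DifferentiableAt.fun_finsetProd fun z _ => (differentiableAt_id.sub_const z).pow _
  have hPne : ∀ w, w ∉ Z → P w ≠ 0 := by
    intro w hw
    refine Finset.prod_ne_zero_iff.2 fun z hz => pow_ne_zero _ (sub_ne_zero.2 ?_)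
    rintro rfl; exact hw hz
  set Q : ℂ → ℂ → ℂ := fun z w => ∏ z' ∈ Z.erase z, (w - z') ^ m z' with hQdef
  have hQd : ∀ z w, DifferentiableAt ℂ (Q z) w := fun z w =>
    DifferentiableAt.fun_finsetProd fun z' _ => (differentiableAt_id.sub_const z').pow _
  have hQne : ∀ z ∈ Z, Q z z ≠ 0 := by
    intro z hz
    refine Finset.prod_ne_zero_iff.2 fun z' hz' => pow_ne_zero _ (sub_ne_zero.2 ?_)
    rintro rfl; exact (Finset.mem_erase.1 hz').1 rfl
  set g : ℂ → ℂ := fun w => if w ∈ Z then h w w / Q w w else f w / P w with hgdef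
  have hZc : IsOpen ((Z : Set ℂ))ᶜ := Z.finite_toSet.isClosed.isOpen_compl
  -- differentiability of g on U
  have hgd : ∀ w ∈ U, DifferentiableAt ℂ g w := by
    intro w hw
    by_cases hwZ : w ∈ Z
    · have heq : g =ᶠ[nhds w] fun w' => h w w' / Q w w' := by
        filter_upwards [hh_eq w hwZ,
          (((Z.erase w).finite_toSet.isClosed.isOpen_compl).mem_nhds
            (by simp : w ∈ ((Z.erase w : Finset ℂ) : Set ℂ)ᶜ))] with w' h1 h2
        by_cases hww : w' = w
        · subst hww; simp [hgdef, hwZ]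
        · have hw'Z : w' ∉ Z := by
            intro hc
            exact h2 (Finset.mem_coe.2 (Finset.mem_erase.2 ⟨hww, hc⟩))
          have hPw' : P w' = (w' - w) ^ m w * Q w w' :=
            (Finset.mul_prod_erase Z _ hwZ).symm
          have hpow : (w' - w) ^ m w ≠ 0 := pow_ne_zero _ (sub_ne_zero.2 hww)
          simp only [hgdef, if_neg hw'Z]
          rw [h1, hPw', mul_div_mul_left _ _ hpow]
      exact (((hh_an w hwZ).differentiableAt).div (hQd w w) (hQne w hwZ)).congr_of_eventuallyEq heq
    · have heq : g =ᶠ[nhds w] fun w' => f w' / P w' := by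
        filter_upwards [hZc.mem_nhds hwZ] with w' hw'
        simp only [hgdef, if_neg (by exact hw' : w' ∉ Z)]
      exact ((hf.differentiableAt (hU.mem_nhds hw)).div (hPd w) (hPne w hwZ)).congr_of_eventuallyEq
        heq
  -- g has no zeros on the closed ball
  have hgne : ∀ w ∈ Metric.closedBall c R, g w ≠ 0 := by
    intro w hw
    by_cases hwZ : w ∈ Z
    · simpa [hgdef, hwZ] using div_ne_zero (hh_ne w hwZ) (hQne w hwZ)
    · have hfw : f w ≠ 0 := by
        rcases (Metric.mem_closedBall.1 hw).lt_or_eq with hlt | heq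
        · intro h0; exact hwZ ((hZ w).2 ⟨Metric.mem_ball.2 hlt, h0⟩)
        · exact hbd w (Metric.mem_sphere.2 heq)
      simpa [hgdef, hwZ] using div_ne_zero hfw (hPne w hwZ)
  set V : Set ℂ := U ∩ g ⁻¹' {0}ᶜ with hVdef
  have hgc : ContinuousOn g U := fun w hw => (hgd w hw).continuousAt.continuousWithinAt
  have hVo : IsOpen V := hgc.isOpen_inter_preimage hU isOpen_compl_singleton
  have hVsub : Metric.closedBall c R ⊆ V := fun w hw => ⟨hsub hw, hgne w hw⟩
  have hgdV : DifferentiableOn ℂ g V := fun w hw => (hgd w hw.1).differentiableWithinAt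
  have hdgV : DifferentiableOn ℂ (deriv g) V :=
    ((hgdV.analyticOnNhd hVo).deriv).differentiableOn
  have hld : DifferentiableOn ℂ (logDeriv g) V := by
    have : DifferentiableOn ℂ (fun w => deriv g w / g w) V :=
      hdgV.div hgdV fun w hw => hw.2
    exact this
  -- key pointwise identity on the sphere
  have key : ∀ w ∈ Metric.sphere c R,
      deriv f w / f w = (∑ z ∈ Z, (m z : ℂ) * (w - z)⁻¹) + logDeriv g w := by
    intro w hw
    have hwZ : w ∉ Z := by
      intro hc
      have hb := ((hZ w).1 hc).1
      simp only [Metric.mem_ball] at hb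
      simp only [Metric.mem_sphere] at hw
      exact absurd (hw ▸ hb) (lt_irrefl R)
    have hUw : w ∈ U := hsub (Metric.sphere_subset_closedBall hw)
    have hfw : f w ≠ 0 := hbd w hw
    have hPw : P w ≠ 0 := hPne w hwZ
    have hgw : g w ≠ 0 := hgne w (Metric.sphere_subset_closedBall hw)
    have heq : f =ᶠ[nhds w] fun w' => g w' * P w' := by
      filter_upwards [hZc.mem_nhds hwZ] with w' hw'
      have hw'Z : w' ∉ Z := hw'
      simp only [hgdef, if_neg hw'Z]
      rw [div_mul_cancel₀ _ (hPne w' hw'Z)]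
    have hstep1 : deriv f w / f w = logDeriv (fun w' => g w' * P w') w := by
      rw [← logDeriv_apply, logDeriv_apply, logDeriv_apply, heq.deriv_eq, heq.eq_of_nhds]
    have hstep2 : logDeriv (fun w' => g w' * P w') w = logDeriv g w + logDeriv P w :=
      logDeriv_mul w hgw hPw (hgd w hUw) (hPd w)
    have hne : ∀ z ∈ Z, w - z ≠ 0 := by
      intro z hz
      refine sub_ne_zero.2 ?_
      rintro rfl; exact hwZ hz
    have hstep3 : logDeriv P w = ∑ z ∈ Z, (m z : ℂ) * (w - z)⁻¹ := by
      rw [hPdef]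
      rw [logDeriv_prod (s := Z) (f := fun z w' => (w' - z) ^ m z) (x := w)
        (fun z hz => pow_ne_zero _ (hne z hz))
        (fun z hz => (differentiableAt_id.sub_const z).pow _)]
      refine Finset.sum_congr rfl fun z hz => ?_
      rw [logDeriv_fun_pow (f := fun w' => w' - z) (differentiableAt_fun_id.sub_const z)]
      congr 1
      rw [logDeriv_apply]
      have : deriv (fun w' => w' - z) w = 1 := by
        simp [deriv_sub_const]
      rw [this, one_div]
    rw [hstep1, hstep2, hstep3, add_comm]
  -- integrability facts
  have hint1 : ∀ z ∈ Z, CircleIntegrable (fun w => (m z : ℂ) * (w - z)⁻¹) c R := by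
    intro z hz
    refine ContinuousOn.circleIntegrable hR.le ?_
    refine continuousOn_const.mul (ContinuousOn.inv₀ (by fun_prop) ?_)
    intro w hw
    refine sub_ne_zero.2 ?_
    rintro rfl
    have hb := ((hZ w).1 hz).1
    simp only [Metric.mem_ball] at hb
    simp only [Metric.mem_sphere] at hw
    exact absurd (hw ▸ hb) (lt_irrefl R)
  have hint2 : CircleIntegrable (logDeriv g) c R :=
    ContinuousOn.circleIntegrable hR.le
      ((hld.continuousOn).mono fun w hw => hVsub (Metric.sphere_subset_closedBall hw))
  have hintsum : CircleIntegrable (fun w => ∑ z ∈ Z, (m z : ℂ) * (w - z)⁻¹) c R :=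
    circleIntegrable_finset_sum Z _ hint1
  -- Cauchy-Goursat for logDeriv g
  have hzero : (∮ z in C(c, R), logDeriv g z) = 0 := by
    refine circleIntegral_eq_zero_of_differentiable_on_off_countable hR.le Set.countable_empty
      ((hld.continuousOn).mono hVsub) fun w hw => ?_
    exact hld.differentiableAt (hVo.mem_nhds (hVsub (Metric.ball_subset_closedBall hw.1)))
  -- compute the integral
  have hI : (∮ z in C(c, R), deriv f z / f z)
      = ∑ z ∈ Z, (m z : ℂ) * (2 * π * Complex.I) := by
    rw [circleIntegral.integral_congr hR.le
      (fun w hw => key w hw : Set.EqOn _ (fun w => (∑ z ∈ Z, (m z : ℂ) * (w - z)⁻¹)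
        + logDeriv g w) (Metric.sphere c R)),
      circleIntegral_add' hintsum hint2, hzero, add_zero,
      circleIntegral_finset_sum Z _ hint1]
    refine Finset.sum_congr rfl fun z hz => ?_
    rw [circleIntegral.integral_const_mul,
      circleIntegral.integral_sub_inv_of_mem_ball ((hZ z).1 hz).1]
  rw [hI, ← Finset.sum_mul, mul_comm (∑ z ∈ Z, (m z : ℂ)) _,
    inv_mul_cancel_left₀ Complex.two_pi_I_ne_zero]
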